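/- In a symmetric friend-oriented hedonic game, when a player i performs an IS-deviation from π(i) to a coalition S in a partition all of whose coalitions are cliques of the friendship graph, the number of within-coalition friendship pairs Φ(π) = ∑_{T ∈ π} |{ {u,v} ⊆ T : w(u,v) > 0 }| increases by exactly |S| - |π(i)| + 1, which is strictly positive. -/

import Mathlib

open Finset

section HedonicDefs

variable {α : Type*} [DecidableEq α] [Fintype α]

/-- Additive utility of player `i` in coalition `S`. -/
def util (w : α → α → ℤ) (S : Finset α) (i : α) : ℤ := ∑ j ∈ S, w i j

/-- `π` is a partition of the player set `V`: every player of `V` lies in its own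
coalition, coalitions are contained in `V`, and membership determines the coalition. -/
def IsPartition (V : Finset α) (π : α → Finset α) : Prop :=
  (∀ i ∈ V, i ∈ π i ∧ π i ⊆ V) ∧ ∀ i ∈ V, ∀ j ∈ π i, π j = π i

/-- `S` is a coalition of the partition `π` on `V`, or the empty coalition. -/
def IsCoalitionOf (V : Finset α) (π : α → Finset α) (S : Finset α) : Prop :=
  S = ∅ ∨ ∃ j ∈ V, S = π j

/-- Player `i` has an NS-deviation from `π i` to `S`. -/
def NSDev (w : α → α → ℤ) (V : Finset α) (π : α → Finset α) (i : α) (S : Finset α) : Prop :=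
  IsCoalitionOf V π S ∧ S ≠ π i ∧ i ∉ S ∧ util w (π i) i < util w (insert i S) i

/-- Player `i` has an IS-deviation from `π i` to `S`: an NS-deviation accepted by
all members of the target coalition `S`. -/
def ISDev (w : α → α → ℤ) (V : Finset α) (π : α → Finset α) (i : α) (S : Finset α) : Prop :=
  NSDev w V π i S ∧ ∀ j ∈ S, util w S j ≤ util w (insert i S) j

/-- Player `i` has a CIS-deviation from `π i` to `S`: an IS-deviation also accepted by
all members of the abandoned coalition. -/
def CISDev (w : α → α → ℤ) (V : Finset α) (π : α → Finset α) (i : α) (S : Finset α) : Prop :=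
  ISDev w V π i S ∧ ∀ j ∈ (π i).erase i, util w (π i) j ≤ util w ((π i).erase i) j

def NashStable (w : α → α → ℤ) (V : Finset α) (π : α → Finset α) : Prop :=
  ∀ i ∈ V, ∀ S : Finset α, ¬ NSDev w V π i S

def IndStable (w : α → α → ℤ) (V : Finset α) (π : α → Finset α) : Prop :=
  ∀ i ∈ V, ∀ S : Finset α, ¬ ISDev w V π i S

def CIStable (w : α → α → ℤ) (V : Finset α) (π : α → Finset α) : Prop :=
  ∀ i ∈ V, ∀ S : Finset α, ¬ CISDev w V π i S

/-- Individual rationality: each player weakly prefers its coalition to being alone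
(being alone gives utility `w i i = 0`). -/
def IndRational (w : α → α → ℤ) (V : Finset α) (π : α → Finset α) : Prop :=
  ∀ i ∈ V, 0 ≤ util w (π i) i

/-- Core stability: no nonempty coalition strongly blocks `π`. -/
def CoreStable (w : α → α → ℤ) (V : Finset α) (π : α → Finset α) : Prop :=
  ¬ ∃ S : Finset α, S ⊆ V ∧ S.Nonempty ∧ ∀ i ∈ S, util w (π i) i < util w S i

/-- `π` is robust for the stability notion `St` under deletion of at most `k` players:
`π` satisfies `St` and so does its truncation after removing any `X` with `|X| ≤ k`. -/
def Robust (St : Finset α → (α → Finset α) → Prop) (V : Finset α)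
    (π : α → Finset α) (k : ℕ) : Prop :=
  St V π ∧ ∀ X ⊆ V, X.card ≤ k → St (V \ X) (fun i => π i \ X)

/-- Symmetric friend-oriented game: symmetric weights, zero on the diagonal, and each
off-diagonal weight equals `n` (friends) or `-1` (enemies), where `n` is the number of players. -/
def FriendOriented (w : α → α → ℤ) : Prop :=
  (∀ i j : α, w i j = w j i) ∧ (∀ i : α, w i i = 0) ∧
    ∀ i j : α, i ≠ j → w i j = (Fintype.card α : ℤ) ∨ w i j = -1

/-- `j` is a friend of `i`. -/
def Friend (w : α → α → ℤ) (i j : α) : Prop := i ≠ j ∧ 0 < w i j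


instance (w : α → α → ℤ) (i j : α) : Decidable (Friend w i j) :=
  inferInstanceAs (Decidable (_ ∧ _))

/-- `S` is a clique of the friendship graph. -/
def IsClique (w : α → α → ℤ) (S : Finset α) : Prop :=
  ∀ i ∈ S, ∀ j ∈ S, i ≠ j → Friend w i j

/-- Two players lie in the same connected component of the friendship graph. -/
def SameComp (w : α → α → ℤ) : α → α → Prop :=
  Relation.ReflTransGen (fun a b => Friend w a b)

/-- The connected component of `v` in the friendship graph, as a set. -/
def comp (w : α → α → ℤ) (v : α) : Set α := {u | SameComp w v u}

end HedonicDefs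
/-- Twice the number of friendship pairs inside `T` (ordered pairs of friends). -/
def friendPairs {α : Type*} [DecidableEq α] [Fintype α] (w : α → α → ℤ)
    (T : Finset α) : ℕ :=
  (T.offDiag.filter fun p => 0 < w p.1 p.2).card

/-- Twice the potential `Φ(π)`: the number of within-coalition friendship pairs,
counted as ordered pairs. -/
def potF {α : Type*} [DecidableEq α] [Fintype α] (w : α → α → ℤ)
    (π : α → Finset α) : ℕ :=
  ∑ T ∈ (Finset.univ : Finset α).image π, friendPairs w T

section AuxPot

variable {α : Type*} [DecidableEq α] [Fintype α]

/-- For a partition into cliques, the potential is `∑ u (|σ u| - 1)`. -/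
lemma potF_eq_int (w : α → α → ℤ) (σ : α → Finset α)
    (hσ : IsPartition (Finset.univ : Finset α) σ) (hcl : ∀ l, IsClique w (σ l)) :
    (potF w σ : ℤ) = ∑ u : α, (((σ u).card : ℤ) - 1) := by
  have hmem : ∀ u : α, u ∈ σ u := fun u => (hσ.1 u (mem_univ u)).1
  have hpart : ∀ a b : α, b ∈ σ a → σ b = σ a := fun a b hb => hσ.2 a (mem_univ a) b hb
  have h1 : ∀ T ∈ (univ : Finset α).image σ, friendPairs w T = T.offDiag.card := by
    intro T hT
    obtain ⟨j, -, rfl⟩ := mem_image.mp hT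
    unfold friendPairs
    rw [filter_true_of_mem]
    intro p hp
    rw [mem_offDiag] at hp
    exact (hcl j p.1 hp.1 p.2 hp.2.1 hp.2.2).2
  have hdisj : ∀ T ∈ (univ : Finset α).image σ, ∀ T' ∈ (univ : Finset α).image σ,
      T ≠ T' → Disjoint T.offDiag T'.offDiag := by
    intro T hT T' hT' hne
    obtain ⟨a, -, rfl⟩ := mem_image.mp hT
    obtain ⟨b, -, rfl⟩ := mem_image.mp hT'
    have hd : Disjoint (σ a) (σ b) := by
      rw [Finset.disjoint_left]
      intro x hxa hxb
      exact hne ((hpart a x hxa).symm.trans (hpart b x hxb))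
    rw [Finset.disjoint_left]
    intro p hp hp'
    rw [mem_offDiag] at hp hp'
    exact (Finset.disjoint_left.mp hd hp.1) hp'.1
  have h2 : potF w σ = (((univ : Finset α).image σ).biUnion Finset.offDiag).card := by
    rw [card_biUnion hdisj]
    exact Finset.sum_congr rfl h1
  have h3 : ((univ : Finset α).image σ).biUnion Finset.offDiag
      = (univ : Finset α).biUnion (fun u => {u} ×ˢ ((σ u).erase u)) := by
    ext p
    simp only [mem_biUnion, mem_image, mem_univ, true_and, mem_product, mem_singleton,
      mem_offDiag, mem_erase]
    constructor
    · rintro ⟨T, ⟨j, rfl⟩, hp1, hp2, hne⟩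
      exact ⟨p.1, rfl, Ne.symm hne, (hpart j p.1 hp1) ▸ hp2⟩
    · rintro ⟨u, rfl, hne, hp2⟩
      exact ⟨σ p.1, ⟨p.1, rfl⟩, hmem p.1, hp2, Ne.symm hne⟩
  have h4 : (((univ : Finset α).biUnion (fun u => {u} ×ˢ ((σ u).erase u))).card : ℤ)
      = ∑ u : α, (((σ u).card : ℤ) - 1) := by
    rw [card_biUnion]
    · push_cast
      apply Finset.sum_congr rfl
      intro u _
      rw [Finset.card_product, Finset.card_singleton, one_mul,
        Finset.card_erase_of_mem (hmem u)]
      have h1 : 1 ≤ (σ u).card := Finset.card_pos.mpr ⟨u, hmem u⟩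
      push_cast [Nat.cast_sub h1]
      ring
    · intro x _ y _ hxy
      rw [Function.onFun, Finset.disjoint_left]
      intro p hp hp'
      rw [mem_product, mem_singleton] at hp hp'
      exact hxy (hp.1.symm.trans hp'.1)
  rw [h2, h3, h4]

end AuxPot

/-- In a symmetric friend-oriented game whose current partition consists
of cliques, an IS-deviation of `i` to `S` increases the number of within-coalition
friendship pairs by exactly `|S| - |π i| + 1 > 0`. -/
theorem is_deviation_potential_friend_oriented {α : Type*} [DecidableEq α] [Fintype α]
    (w : α → α → ℤ) (hw : FriendOriented w)
    (π : α → Finset α) (hπ : IsPartition (Finset.univ : Finset α) π)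
    (hcliques : ∀ l : α, IsClique w (π l))
    (i : α) (S : Finset α) (hdev : ISDev w Finset.univ π i S)
    (π' : α → Finset α)
    (hπ' : π' = fun l =>
      if l ∈ insert i S then insert i S else if l ∈ π i then (π i).erase i else π l) :
    (potF w π' : ℤ) = potF w π + 2 * ((S.card : ℤ) - (π i).card + 1) ∧
      0 < (S.card : ℤ) - (π i).card + 1 := by
  obtain ⟨⟨hco, hneS, hiS, hut⟩, hacc⟩ := hdev
  obtain ⟨hsym, hdiag, hvals⟩ := hw
  have hmem : ∀ u : α, u ∈ π u := fun u => (hπ.1 u (mem_univ u)).1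
  have hpart : ∀ a b : α, b ∈ π a → π b = π a := fun a b hb => hπ.2 a (mem_univ a) b hb
  have hn : 0 < (Fintype.card α : ℤ) := by
    have : 0 < Fintype.card α := @Fintype.card_pos α _ ⟨i⟩
    exact_mod_cast this
  have hcard1 : 1 ≤ (π i).card := Finset.card_pos.mpr ⟨i, hmem i⟩
  -- weights between i and its coalition members
  have hwi : ∀ j ∈ (π i).erase i, w i j = (Fintype.card α : ℤ) := by
    intro j hj
    rw [mem_erase] at hj
    have hf := hcliques i i (hmem i) j hj.2 (Ne.symm hj.1)
    rcases hvals i j (Ne.symm hj.1) with h | h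
    · exact h
    · exfalso; have := hf.2; omega
  have hutpi : util w (π i) i = (((π i).card : ℤ) - 1) * Fintype.card α := by
    unfold util
    rw [← Finset.sum_erase_add _ _ (hmem i), hdiag, add_zero,
      Finset.sum_congr rfl hwi, Finset.sum_const, Finset.card_erase_of_mem (hmem i),
      nsmul_eq_mul]
    push_cast [Nat.cast_sub hcard1]
    ring
  -- S is nonempty (a coalition of π)
  have hSco : ∃ j₀, S = π j₀ := by
    rcases hco with h | ⟨j₀, -, h⟩
    · exfalso
      subst h
      have h0 : util w (insert i (∅ : Finset α)) i = 0 := by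
        simp [util, hdiag]
      rw [h0, hutpi] at hut
      nlinarith [hn, hcard1, (by exact_mod_cast hcard1 : (1:ℤ) ≤ (π i).card)]
    · exact ⟨j₀, h⟩
  obtain ⟨j₀, hSj⟩ := hSco
  have hπS : ∀ x ∈ S, π x = S := by
    intro x hx
    rw [hSj] at hx ⊢
    exact hpart j₀ x hx
  have hdisjS : ∀ x ∈ S, x ∉ π i := by
    intro x hx hxp
    exact hneS ((hπS x hx).symm.trans (hpart i x hxp))
  -- all members of S are friends of i
  have hwiS : ∀ j ∈ S, w i j = (Fintype.card α : ℤ) := by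
    intro j hj
    have hji : j ≠ i := fun h => hiS (h ▸ hj)
    have hle := hacc j hj
    have hsum : util w (insert i S) j = w j i + util w S j := by
      unfold util
      rw [Finset.sum_insert hiS]
    rw [hsum] at hle
    have h0 : 0 ≤ w j i := by linarith
    rcases hvals j i hji with h | h
    · rw [hsym]; exact h
    · omega
  have hutiS : util w (insert i S) i = (S.card : ℤ) * Fintype.card α := by
    unfold util
    rw [Finset.sum_insert hiS, hdiag i, Finset.sum_congr rfl hwiS, Finset.sum_const]
    ring
  -- positivity
  have hkey : ((π i).card : ℤ) - 1 < S.card := by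
    rw [hutpi, hutiS] at hut
    exact lt_of_mul_lt_mul_right hut (le_of_lt hn)
  have hpos : 0 < (S.card : ℤ) - (π i).card + 1 := by linarith
  refine ⟨?_, hpos⟩
  -- values of π'
  have hπ'1 : ∀ u ∈ insert i S, π' u = insert i S := by
    intro u hu; rw [hπ']; simp only [hu, if_true]
  have hπ'2 : ∀ u ∈ (π i).erase i, π' u = (π i).erase i := by
    intro u hu
    rw [mem_erase] at hu
    have h1 : u ∉ insert i S := by
      rw [mem_insert]
      push_neg
      exact ⟨hu.1, fun hx => hdisjS u hx hu.2⟩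
    rw [hπ']
    simp only [h1, if_false, hu.2, if_true]
  have hπ'3 : ∀ u, u ∉ insert i S → u ∉ π i → π' u = π u := by
    intro u h1 h2
    rw [hπ']
    simp only [h1, if_false, h2, if_false]
  -- π' is a partition
  have hcases : ∀ u : α, u ∈ insert i S ∨ u ∈ (π i).erase i ∨ (u ∉ insert i S ∧ u ∉ π i) := by
    intro u
    by_cases h1 : u ∈ insert i S
    · exact Or.inl h1
    · by_cases h2 : u ∈ π i
      · refine Or.inr (Or.inl (mem_erase.mpr ⟨?_, h2⟩))
        intro hui
        exact h1 (hui ▸ mem_insert_self i S)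
      · exact Or.inr (Or.inr ⟨h1, h2⟩)
  have hπ'part : IsPartition (Finset.univ : Finset α) π' := by
    constructor
    · intro u _
      refine ⟨?_, Finset.subset_univ _⟩
      rcases hcases u with h | h | ⟨h1, h2⟩
      · rw [hπ'1 u h]; exact h
      · rw [hπ'2 u h]; exact h
      · rw [hπ'3 u h1 h2]; exact hmem u
    · intro a _ b hb
      rcases hcases a with h | h | ⟨h1, h2⟩
      · rw [hπ'1 a h] at hb ⊢; exact hπ'1 b hb
      · rw [hπ'2 a h] at hb ⊢; exact hπ'2 b hb
      · rw [hπ'3 a h1 h2] at hb ⊢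
        have hba : π b = π a := hpart a b hb
        have hb1 : b ∉ insert i S := by
          intro hbs
          rcases mem_insert.mp hbs with rfl | hbS
          · exact h2 (hba.symm ▸ hmem a)
          · have hpaS : π a = S := hba.symm.trans (hπS b hbS)
            exact h1 (mem_insert.mpr (Or.inr (hpaS ▸ hmem a)))
        have hb2 : b ∉ π i := by
          intro hbp
          have : π a = π i := hba ▸ hpart i b hbp
          exact h2 (this ▸ hmem a)
        rw [hπ'3 b hb1 hb2]
        exact hba
  -- π' coalitions are cliques
  have hS'clique : IsClique w (insert i S) := by
    intro u hu v hv huv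
    rcases mem_insert.mp hu with rfl | hu' <;> rcases mem_insert.mp hv with rfl | hv'
    · exact absurd rfl huv
    · exact ⟨huv, by rw [hwiS v hv']; exact hn⟩
    · exact ⟨huv, by rw [hsym, hwiS u hu']; exact hn⟩
    · rw [hSj] at hu' hv'
      exact hcliques j₀ u hu' v hv' huv
  have hcl' : ∀ l, IsClique w (π' l) := by
    intro l
    rcases hcases l with h | h | ⟨h1, h2⟩
    · rw [hπ'1 l h]; exact hS'clique
    · rw [hπ'2 l h]
      intro u hu v hv huv
      exact hcliques i u (mem_of_mem_erase hu) v (mem_of_mem_erase hv) huv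
    · rw [hπ'3 l h1 h2]; exact hcliques l
  -- potential difference
  have hP := potF_eq_int w π hπ hcliques
  have hP' := potF_eq_int w π' hπ'part hcl'
  have hdiff : (potF w π' : ℤ) - potF w π
      = ∑ u : α, (((π' u).card : ℤ) - ((π u).card : ℤ)) := by
    rw [hP, hP', ← Finset.sum_sub_distrib]
    exact Finset.sum_congr rfl (fun u _ => by ring)
  set g : α → ℤ := fun u => ((π' u).card : ℤ) - ((π u).card : ℤ) with hg
  have hudisj : Disjoint (insert i S) ((π i).erase i) := by
    rw [Finset.disjoint_left]
    intro x hx hx'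
    rw [mem_erase] at hx'
    rcases mem_insert.mp hx with rfl | hxS
    · exact hx'.1 rfl
    · exact hdisjS x hxS hx'.2
  have hsum0 : ∑ u ∈ (insert i S ∪ (π i).erase i), g u = ∑ u : α, g u := by
    apply Finset.sum_subset (Finset.subset_univ _)
    intro u _ hu
    rw [Finset.mem_union] at hu
    push_neg at hu
    rcases hcases u with h | h | ⟨h1, h2⟩
    · exact absurd h hu.1
    · exact absurd h hu.2
    · simp only [hg, hπ'3 u h1 h2, sub_self]
  have hgi : g i = (S.card : ℤ) + 1 - (π i).card := by
    simp only [hg, hπ'1 i (mem_insert_self i S), Finset.card_insert_of_notMem hiS]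
    push_cast
    ring
  have hgS : ∀ u ∈ S, g u = 1 := by
    intro u hu
    simp only [hg, hπ'1 u (mem_insert_of_mem hu), Finset.card_insert_of_notMem hiS,
      hπS u hu]
    push_cast
    ring
  have hgE : ∀ u ∈ (π i).erase i, g u = -1 := by
    intro u hu
    have hupi : π u = π i := hpart i u (mem_of_mem_erase hu)
    simp only [hg, hπ'2 u hu, Finset.card_erase_of_mem (hmem i), hupi]
    push_cast [Nat.cast_sub hcard1]
    ring
  have hsum1 : ∑ u ∈ insert i S, g u = (S.card : ℤ) + 1 - (π i).card + S.card := by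
    rw [Finset.sum_insert hiS, hgi, Finset.sum_congr rfl hgS, Finset.sum_const]
    ring
  have hsum2 : ∑ u ∈ (π i).erase i, g u = -(((π i).card : ℤ) - 1) := by
    rw [Finset.sum_congr rfl hgE, Finset.sum_const, Finset.card_erase_of_mem (hmem i)]
    simp only [smul_neg, nsmul_eq_mul, mul_one]
    omega
  have htotal : ∑ u : α, g u = 2 * ((S.card : ℤ) - (π i).card + 1) := by
    rw [← hsum0, Finset.sum_union hudisj, hsum1, hsum2]
    ring
  have : (potF w π' : ℤ) - potF w π = 2 * ((S.card : ℤ) - (π i).card + 1) := by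
    rw [hdiff]; exact htotal
  linarith
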